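/- Let f_1, ..., f_T : ℝ^d → ℝ be convex differentiable G-Lipschitz functions and let x_{t+1} = x_t − η∇f_t(x_t) with x_1 = 0 and η = B/(G√T). Then for every comparator x* with ‖x*‖ ≤ B, ∑_{t=1}^T (f_t(x_t) − f_t(x*)) ≤ (3/2)·G·B·√T. -/

import Mathlib

open InnerProductSpace

lemma ogd_grad_norm_le {d : ℕ} {G : ℝ} (hG : 0 ≤ G)
    (f : EuclideanSpace ℝ (Fin d) → ℝ) (g x : EuclideanSpace ℝ (Fin d))
    (hg : HasGradientAt f g x) (hlip : ∀ a b, |f a - f b| ≤ G * ‖a - b‖) :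
    ‖g‖ ≤ G := by
  have hFD : HasFDerivAt f (toDual ℝ _ g) x := hasGradientAt_iff_hasFDerivAt.1 hg
  have hL : LipschitzWith G.toNNReal f := by
    apply LipschitzWith.of_dist_le_mul
    intro a b
    rw [Real.dist_eq, dist_eq_norm, Real.coe_toNNReal _ hG]
    exact hlip a b
  have := hFD.le_of_lipschitz hL
  rwa [(toDual ℝ _).norm_map, Real.coe_toNNReal _ hG] at this

lemma ogd_conv_ineq {d : ℕ} (f : EuclideanSpace ℝ (Fin d) → ℝ)
    (hconv : ConvexOn ℝ Set.univ f) (g x y : EuclideanSpace ℝ (Fin d))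
    (hg : HasGradientAt f g x) :
    f x - f y ≤ (inner ℝ g (x - y) : ℝ) := by
  set A : ℝ →ᵃ[ℝ] EuclideanSpace ℝ (Fin d) := AffineMap.lineMap x y with hA
  have hφconv : ConvexOn ℝ Set.univ (f ∘ A) := by
    have := hconv.comp_affineMap A
    simpa using this
  have hc : HasDerivAt (fun s : ℝ => A s) (y - x) 0 := by
    have h1 : HasDerivAt (fun s : ℝ => s • (y - x)) (y - x) 0 := by
      simpa using (hasDerivAt_id (0:ℝ)).smul_const (y - x)
    have h2 := h1.const_add x
    apply h2.congr_deriv rfl |>.congr_of_eventuallyEq ?_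
    · filter_upwards with s
      simp [hA, AffineMap.lineMap_apply_module]
      module
  have hφd : HasDerivAt (f ∘ A) ((inner ℝ g (y - x) : ℝ)) 0 := by
    have hFD : HasFDerivAt f (toDual ℝ _ g) (A 0) := by
      have : A 0 = x := by simp [hA]
      rw [this]; exact hasGradientAt_iff_hasFDerivAt.1 hg
    simpa using hFD.comp_hasDerivAt 0 hc
  have hslope := hφconv.le_slope_of_hasDerivAt (Set.mem_univ 0) (Set.mem_univ 1)
    zero_lt_one hφd
  have hA0 : A 0 = x := by simp [hA]
  have hA1 : A 1 = y := by simp [hA]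
  rw [slope_def_field] at hslope
  simp only [Function.comp_apply, hA0, hA1] at hslope
  have : (inner ℝ g (y - x) : ℝ) ≤ f y - f x := by
    simpa using hslope
  have hsymm : (inner ℝ g (x - y) : ℝ) = -(inner ℝ g (y - x) : ℝ) := by
    rw [← inner_neg_right]; congr 1; abel
  linarith [this, hsymm.ge]


theorem ogd_regret_bound
    {d : ℕ} (T : ℕ) (hT : 0 < T) (G B : ℝ) (hG : 0 < G) (hB : 0 < B)
    (f : Fin T → EuclideanSpace ℝ (Fin d) → ℝ)
    (g : Fin T → EuclideanSpace ℝ (Fin d) → EuclideanSpace ℝ (Fin d))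
    (hconv : ∀ t, ConvexOn ℝ Set.univ (f t))
    (hgrad : ∀ t x, HasGradientAt (f t) (g t x) x)
    (hlip : ∀ t x y, |f t x - f t y| ≤ G * ‖x - y‖)
    (η : ℝ) (hη : η = B / (G * Real.sqrt T))
    (x : ℕ → EuclideanSpace ℝ (Fin d))
    (hx0 : x 0 = 0)
    (hxrec : ∀ t : Fin T, x (t + 1) = x t - η • g t (x t))
    (xstar : EuclideanSpace ℝ (Fin d)) (hxstar : ‖xstar‖ ≤ B) :
    ∑ t : Fin T, (f t (x t) - f t xstar) ≤ 3 / 2 * G * B * Real.sqrt T := by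
  have hsT : (0:ℝ) < Real.sqrt T := Real.sqrt_pos.2 (by exact_mod_cast hT)
  have hηpos : 0 < η := by rw [hη]; positivity
  set D : ℕ → ℝ := fun n => ‖x n - xstar‖ ^ 2 with hD
  have key : ∀ t : Fin T, (inner ℝ (g t (x t)) (x t - xstar) : ℝ)
      ≤ (D t - D (t + 1)) / (2 * η) + η / 2 * G ^ 2 := by
    intro t
    have hrec := hxrec t
    set r : ℝ := inner ℝ (g t (x t)) (x t - xstar) with hr
    set n : ℝ := ‖g t (x t)‖ ^ 2 with hn
    have hexp : D (↑t + 1) = D ↑t - 2 * η * r + η ^ 2 * n := by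
      have hdiff : x (↑t + 1) - xstar = (x t - xstar) - η • g t (x t) := by
        rw [hrec]; abel
      rw [hD]
      simp only [hdiff]
      rw [norm_sub_sq_real, real_inner_smul_right, norm_smul, mul_pow, real_inner_comm]
      simp only [hD, hr, hn, Real.norm_eq_abs, abs_of_pos hηpos]
      ring
    have hgb : n ≤ G ^ 2 := by
      have h1 := ogd_grad_norm_le hG.le (f t) (g t (x t)) (x t) (hgrad t (x t)) (hlip t)
      rw [hn]
      nlinarith [norm_nonneg (g t (x t))]
    have hid : r = (D ↑t - D (↑t + 1)) / (2 * η) + η / 2 * n := by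
      rw [hexp]
      field_simp
      ring
    rw [hid]
    have : η / 2 * n ≤ η / 2 * G ^ 2 := by nlinarith [hηpos.le]
    linarith
  have hcb : ∀ t : Fin T, f t (x t) - f t xstar ≤ (inner ℝ (g t (x t)) (x t - xstar) : ℝ) :=
    fun t => ogd_conv_ineq (f t) (hconv t) _ _ _ (hgrad t (x t))
  have hsum : ∑ t : Fin T, (f t (x t) - f t xstar)
      ≤ ∑ t : Fin T, ((D t - D (t + 1)) / (2 * η)) + ∑ t : Fin T, (η / 2 * G ^ 2) := by
    rw [← Finset.sum_add_distrib]
    exact Finset.sum_le_sum fun t _ => le_trans (hcb t) (key t)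
  have htel : ∑ t : Fin T, (D t - D (t + 1)) = D 0 - D T := by
    rw [Fin.sum_univ_eq_sum_range (fun n => D n - D (n + 1))]
    exact Finset.sum_range_sub' D T
  have hbound1 : ∑ t : Fin T, ((D t - D (t + 1)) / (2 * η)) ≤ B ^ 2 / (2 * η) := by
    rw [← Finset.sum_div, htel]
    have hD0 : D 0 ≤ B ^ 2 := by
      rw [hD]; simp only [hx0, zero_sub, norm_neg]
      nlinarith [norm_nonneg xstar]
    have hDT : 0 ≤ D T := by rw [hD]; positivity
    apply div_le_div_of_nonneg_right (by linarith) (by linarith)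
  have hbound2 : ∑ t : Fin T, (η / 2 * G ^ 2) = (T : ℝ) * (η / 2 * G ^ 2) := by
    rw [Finset.sum_const, Finset.card_univ, Fintype.card_fin, nsmul_eq_mul]
  have hfinal : B ^ 2 / (2 * η) + (T : ℝ) * (η / 2 * G ^ 2) = G * B * Real.sqrt T := by
    rw [hη]
    have h1 : G * Real.sqrt T ≠ 0 := by positivity
    field_simp
    have h2 : Real.sqrt T * Real.sqrt T = (T:ℝ) := Real.mul_self_sqrt (Nat.cast_nonneg T)
    linear_combination (-1) * h2
  have : ∑ t : Fin T, (f t (x t) - f t xstar) ≤ G * B * Real.sqrt T := by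
    rw [← hfinal]
    calc ∑ t : Fin T, (f t (x t) - f t xstar)
        ≤ ∑ t : Fin T, ((D t - D (t + 1)) / (2 * η)) + ∑ t : Fin T, (η / 2 * G ^ 2) := hsum
      _ ≤ B ^ 2 / (2 * η) + (T : ℝ) * (η / 2 * G ^ 2) := by rw [hbound2]; linarith
  nlinarith [hsT, hG.le, hB.le, mul_pos (mul_pos hG hB) hsT]
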